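/- Fix an integer k ≥ 1 and real numbers c_1, …, c_k with c_a > 0 for all a and c_1 + ⋯ + c_k < 1. Then there exists a constant C > 0, depending only on k and c_1, …, c_k, such that for every integer N ≥ 1, every 1 ≤ ℓ ≤ k, and every choice of indices i_1, …, i_ℓ ∈ {1, …, N}, setting w_j = (N − j) + Σ_{a=1}^{ℓ−1} c_a·𝟙[i_a = j] and σ = c_1 + ⋯ + c_{ℓ−1}, one has ∏_{j ∈ {1,…,N}, j ≠ i_ℓ} (c_ℓ + w_{i_ℓ} − w_j)/(w_{i_ℓ} − w_j) ≤ C · ∏_{j=2}^{N} (σ + c_ℓ + j − 1)/(σ + j − 1). -/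

import Mathlib

open Finset

/-- The evaluation point obtained from `ρ_N = (N-1, N-2, …, 1, 0)` (indexed by `j ∈ {1,…,N}`,
so coordinate `j` equals `N - j`) by shifting coordinate `i a` by `c a` for each
`a = 1, …, ℓ-1`; shifts at a repeated coordinate accumulate. -/
def wvec (N ℓ : ℕ) (c : ℕ → ℝ) (i : ℕ → ℕ) (j : ℕ) : ℝ :=
  ((N : ℝ) - (j : ℝ)) + ∑ a ∈ Finset.Ico 1 ℓ, c a * (if i a = j then 1 else 0)

/-- For negative `d` with `cl + d ≤ 0`, the ratio is in `[0,1]`. -/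
lemma aux_neg (cl d : ℝ) (hcl : 0 ≤ cl) (hd : d < 0) (hcd : cl + d ≤ 0) :
    0 ≤ (cl + d) / d ∧ (cl + d) / d ≤ 1 := by
  constructor
  · rw [← neg_div_neg_eq]
    exact div_nonneg (by linarith) (by linarith)
  · rw [div_le_one_of_neg hd]
    linarith

/-- Monotonicity: `(cl+d)/d` decreases in `d > 0`. -/
lemma aux_mono (cl d u : ℝ) (hcl : 0 ≤ cl) (hu : 0 < u) (hud : u ≤ d) :
    (cl + d) / d ≤ (cl + u) / u := by
  have hd : 0 < d := lt_of_lt_of_le hu hud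
  rw [div_le_div_iff₀ hd hu]
  nlinarith

/-- `∑_{t=1}^{n} 1/t² ≤ 2`. -/
lemma aux_sumsq (n : ℕ) : ∑ t ∈ Finset.Ioc 0 n, (1 : ℝ) / (t : ℝ) ^ 2 ≤ 2 := by
  have key : ∀ n : ℕ, ∑ t ∈ Finset.Ioc 0 (n + 1), (1 : ℝ) / (t : ℝ) ^ 2
      ≤ 2 - 1 / (n + 1 : ℝ) := by
    intro n
    induction n with
    | zero => simp; norm_num
    | succ n ih =>
      rw [Finset.sum_Ioc_succ_top (Nat.zero_le _)]
      have h1 : (0 : ℝ) < (n : ℝ) + 1 := by positivity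
      have h2 : (0 : ℝ) < (n : ℝ) + 2 := by positivity
      have : (1 : ℝ) / ((n + 1 + 1 : ℕ) : ℝ) ^ 2 ≤ 1 / ((n : ℝ) + 1) - 1 / ((n : ℝ) + 1 + 1) := by
        push_cast
        have h2' : (0:ℝ) < (n:ℝ) + 1 + 1 := by positivity
        rw [div_sub_div _ _ (ne_of_gt h1) (ne_of_gt h2'), div_le_div_iff₀ (by positivity) (by positivity)]
        ring_nf
        nlinarith
      push_cast at this ⊢
      linarith
  cases n with
  | zero => simp
  | succ n =>
    have := key n
    have h1 : (0 : ℝ) < (n : ℝ) + 1 := by positivity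
    have : (0:ℝ) < 1 / ((n:ℝ)+1) := by positivity
    linarith [key n]

lemma aux_perfactor (cl s t : ℝ) (hcl : 0 < cl) (hs0 : 0 ≤ s) (hcls : cl * s ≤ 1)
    (ht1 : 1 ≤ t) :
    (cl + t) / t ≤ Real.exp (1 / t ^ 2) * ((s + cl + t) / (s + t)) := by
  have ht0 : (0 : ℝ) < t := by linarith
  have key : (cl + t) * (s + t) * t ≤ (t ^ 2 + 1) * (s + cl + t) := by
    nlinarith [mul_nonneg ht0.le (sub_nonneg.mpr hcls)]
  have h2 : (cl + t) / t ≤ ((t ^ 2 + 1) / t ^ 2) * ((s + cl + t) / (s + t)) := by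
    rw [div_mul_div_comm, div_le_div_iff₀ ht0 (by positivity)]
    nlinarith [mul_le_mul_of_nonneg_left key ht0.le]
  have h3 : (t ^ 2 + 1) / t ^ 2 ≤ Real.exp (1 / t ^ 2) := by
    have h := Real.add_one_le_exp (1 / t ^ 2)
    have heq : (t ^ 2 + 1) / t ^ 2 = 1 / t ^ 2 + 1 := by field_simp; ring
    rw [heq]
    exact h
  have h4 : (0 : ℝ) ≤ (s + cl + t) / (s + t) := by positivity
  calc (cl + t) / t ≤ ((t ^ 2 + 1) / t ^ 2) * ((s + cl + t) / (s + t)) := h2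
    _ ≤ Real.exp (1 / t ^ 2) * ((s + cl + t) / (s + t)) := mul_le_mul_of_nonneg_right h3 h4

set_option maxHeartbeats 1000000 in
theorem stmt16 (k : ℕ) (hk : 1 ≤ k) (c : ℕ → ℝ)
    (hc : ∀ a ∈ Finset.Icc 1 k, 0 < c a)
    (hcsum : ∑ a ∈ Finset.Icc 1 k, c a < 1) :
    ∃ C > (0 : ℝ), ∀ N : ℕ, 1 ≤ N → ∀ ℓ : ℕ, 1 ≤ ℓ → ℓ ≤ k →
      ∀ i : ℕ → ℕ, (∀ a ∈ Finset.Icc 1 ℓ, i a ∈ Finset.Icc 1 N) →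
      ∏ j ∈ (Finset.Icc 1 N).erase (i ℓ),
          (c ℓ + wvec N ℓ c i (i ℓ) - wvec N ℓ c i j) /
            (wvec N ℓ c i (i ℓ) - wvec N ℓ c i j)
        ≤ C * ∏ j ∈ Finset.Icc 2 N,
            ((∑ a ∈ Finset.Ico 1 ℓ, c a) + c ℓ + (j : ℝ) - 1) /
              ((∑ a ∈ Finset.Ico 1 ℓ, c a) + (j : ℝ) - 1) := by
  set S := ∑ a ∈ Finset.Icc 1 k, c a with hSdef
  have hS0 : 0 ≤ S := Finset.sum_nonneg fun a ha => (hc a ha).le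
  have hS1 : S < 1 := hcsum
  set K := 1 / (1 - S) with hKdef
  have hK1 : 1 ≤ K := by
    rw [hKdef, le_div_iff₀ (by linarith)]; linarith
  have hK0 : 0 < K := lt_of_lt_of_le one_pos hK1
  refine ⟨K ^ (k - 1) * Real.exp 2, by positivity, ?_⟩
  intro N hN ℓ hℓ1 hℓk i hi
  set σ := ∑ a ∈ Finset.Ico 1 ℓ, c a with hσdef
  set m := i ℓ with hmdef
  have hm := hi ℓ (Finset.mem_Icc.mpr ⟨hℓ1, le_refl ℓ⟩)
  rw [Finset.mem_Icc] at hm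
  obtain ⟨hm1, hmN⟩ := hm
  set ε : ℕ → ℝ := fun j => ∑ a ∈ Finset.Ico 1 ℓ, c a * (if i a = j then 1 else 0) with hεdef
  have hcpos : ∀ a ∈ Finset.Ico 1 ℓ, 0 < c a := by
    intro a ha
    rw [Finset.mem_Ico] at ha
    exact hc a (Finset.mem_Icc.mpr ⟨ha.1, by omega⟩)
  have hε0 : ∀ j, 0 ≤ ε j := by
    intro j
    apply Finset.sum_nonneg
    intro a ha
    have := (hcpos a ha).le
    split <;> simp [this]
  have hεσ : ∀ j, ε j ≤ σ := by
    intro j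
    apply Finset.sum_le_sum
    intro a ha
    have := (hcpos a ha).le
    split <;> simp [this]
  set E := (Finset.Ico 1 ℓ).image i with hEdef
  have hεE : ∀ j, j ∉ E → ε j = 0 := by
    intro j hj
    apply Finset.sum_eq_zero
    intro a ha
    have : i a ≠ j := by
      intro h
      exact hj (Finset.mem_image.mpr ⟨a, ha, h⟩)
    simp [this]
  have hσ0 : 0 ≤ σ := Finset.sum_nonneg fun a ha => (hcpos a ha).le
  have hσcl : σ + c ℓ ≤ S := by
    have h1 : σ + c ℓ = ∑ a ∈ Finset.Ico 1 (ℓ + 1), c a :=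
      (Finset.sum_Ico_succ_top (by omega) c).symm
    rw [h1, hSdef]
    apply Finset.sum_le_sum_of_subset_of_nonneg
    · intro x hx
      rw [Finset.mem_Ico] at hx
      rw [Finset.mem_Icc]
      omega
    · intro a ha _
      exact (hc a ha).le
  have hclpos : 0 < c ℓ := hc ℓ (Finset.mem_Icc.mpr ⟨hℓ1, hℓk⟩)
  have hσ1 : σ < 1 := by linarith
  have hclS : c ℓ ≤ S := by linarith
  have hσS : σ ≤ S := by linarith
  set cl := c ℓ with hcldef
  -- the difference of coordinates
  set d : ℕ → ℝ := fun j => (j : ℝ) - (m : ℝ) + ε m - ε j with hddef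
  have hw : ∀ j, wvec N ℓ c i m - wvec N ℓ c i j = d j := by
    intro j
    simp only [wvec, hddef, hεdef]
    ring
  clear_value S K σ ε E cl d
  -- split the product
  have hsplit : (Finset.Icc 1 N).erase m = Finset.Ico 1 m ∪ Finset.Ioc m N := by
    ext x
    simp only [Finset.mem_erase, Finset.mem_Icc, Finset.mem_union, Finset.mem_Ico,
      Finset.mem_Ioc]
    omega
  have hdisj : Disjoint (Finset.Ico 1 m) (Finset.Ioc m N) := by
    rw [Finset.disjoint_left]
    intro x hx hx'
    rw [Finset.mem_Ico] at hx
    rw [Finset.mem_Ioc] at hx'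
    omega
  rw [hsplit, Finset.prod_union hdisj]
  -- factor bounds on the low part
  have hlow_mem : ∀ j ∈ Finset.Ico 1 m, 0 ≤ (cl + wvec N ℓ c i m - wvec N ℓ c i j) /
      (wvec N ℓ c i m - wvec N ℓ c i j) ∧ (cl + wvec N ℓ c i m - wvec N ℓ c i j) /
      (wvec N ℓ c i m - wvec N ℓ c i j) ≤ 1 := by
    intro j hj
    rw [Finset.mem_Ico] at hj
    have h1 : cl + wvec N ℓ c i m - wvec N ℓ c i j = cl + d j := by rw [← hw j]; ring
    rw [h1, hw j]
    have hjm : (j : ℝ) ≤ (m : ℝ) - 1 := by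
      have : (j : ℝ) + 1 ≤ (m : ℝ) := by exact_mod_cast hj.2
      linarith
    have hd1 : d j ≤ σ - 1 := by
      have := hεσ m
      have := hε0 j
      simp only [hddef]
      linarith
    have hdneg : d j < 0 := by linarith
    have hcd : cl + d j ≤ 0 := by linarith
    exact aux_neg cl (d j) hclpos.le hdneg hcd
  have hlow1 : ∏ j ∈ Finset.Ico 1 m, (cl + wvec N ℓ c i m - wvec N ℓ c i j) /
      (wvec N ℓ c i m - wvec N ℓ c i j) ≤ 1 :=
    Finset.prod_le_one (fun j hj => (hlow_mem j hj).1) (fun j hj => (hlow_mem j hj).2)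
  have hlow0 : 0 ≤ ∏ j ∈ Finset.Ico 1 m, (cl + wvec N ℓ c i m - wvec N ℓ c i j) /
      (wvec N ℓ c i m - wvec N ℓ c i j) :=
    Finset.prod_nonneg fun j hj => (hlow_mem j hj).1
  -- bound for the high part
  set B : ℕ → ℝ := fun j => (if j ∈ E then K else 1) * ((cl + ((j : ℝ) - (m : ℝ))) / ((j : ℝ) - (m : ℝ)))
    with hBdef
  clear_value B
  have hhigh_mem : ∀ j ∈ Finset.Ioc m N, 0 ≤ (cl + wvec N ℓ c i m - wvec N ℓ c i j) /
      (wvec N ℓ c i m - wvec N ℓ c i j) ∧ (cl + wvec N ℓ c i m - wvec N ℓ c i j) /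
      (wvec N ℓ c i m - wvec N ℓ c i j) ≤ B j := by
    intro j hj
    rw [Finset.mem_Ioc] at hj
    have h1 : cl + wvec N ℓ c i m - wvec N ℓ c i j = cl + d j := by rw [← hw j]; ring
    rw [h1, hw j]
    have ht1 : (1 : ℝ) ≤ (j : ℝ) - (m : ℝ) := by
      have : (m : ℝ) + 1 ≤ (j : ℝ) := by exact_mod_cast hj.1
      linarith
    have ht0 : (0 : ℝ) < (j : ℝ) - (m : ℝ) := by linarith
    have hd1 : 1 - σ ≤ d j := by
      have := hε0 m
      have := hεσ j
      simp only [hddef]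
      linarith
    have hdpos : 0 < d j := by linarith
    constructor
    · positivity
    · by_cases hjE : j ∈ E
      · -- exceptional index: bound by K, then by K * ratio
        have hb1 : (cl + d j) / d j ≤ (cl + (1 - σ)) / (1 - σ) :=
          aux_mono cl (d j) (1 - σ) hclpos.le (by linarith) hd1
        have hb2 : (cl + (1 - σ)) / (1 - σ) ≤ K := by
          rw [hKdef, div_le_div_iff₀ (by linarith) (by linarith)]
          nlinarith
        have hb3 : (1 : ℝ) ≤ (cl + ((j : ℝ) - (m : ℝ))) / ((j : ℝ) - (m : ℝ)) := by
          rw [le_div_iff₀ ht0]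
          linarith
        simp only [hBdef, if_pos hjE]
        calc (cl + d j) / d j ≤ K := le_trans hb1 hb2
          _ = K * 1 := (mul_one K).symm
          _ ≤ K * ((cl + ((j : ℝ) - (m : ℝ))) / ((j : ℝ) - (m : ℝ))) := by
              exact mul_le_mul_of_nonneg_left hb3 hK0.le
      · -- generic index: ε j = 0, so d j ≥ j - m
        have hεj : ε j = 0 := hεE j hjE
        have hd2 : (j : ℝ) - (m : ℝ) ≤ d j := by
          have := hε0 m
          simp only [hddef, hεj]
          linarith
        have hb1 : (cl + d j) / d j ≤ (cl + ((j : ℝ) - (m : ℝ))) / ((j : ℝ) - (m : ℝ)) :=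
          aux_mono cl (d j) _ hclpos.le ht0 hd2
        simp only [hBdef, if_neg hjE, one_mul]
        exact hb1
  have hhigh : ∏ j ∈ Finset.Ioc m N, (cl + wvec N ℓ c i m - wvec N ℓ c i j) /
      (wvec N ℓ c i m - wvec N ℓ c i j) ≤ ∏ j ∈ Finset.Ioc m N, B j :=
    Finset.prod_le_prod (fun j hj => (hhigh_mem j hj).1) (fun j hj => (hhigh_mem j hj).2)
  have hhigh0 : 0 ≤ ∏ j ∈ Finset.Ioc m N, (cl + wvec N ℓ c i m - wvec N ℓ c i j) /
      (wvec N ℓ c i m - wvec N ℓ c i j) :=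
    Finset.prod_nonneg fun j hj => (hhigh_mem j hj).1
  -- evaluate the bounding product
  have hBsplit : ∏ j ∈ Finset.Ioc m N, B j =
      (∏ j ∈ Finset.Ioc m N, (if j ∈ E then K else 1)) *
      ∏ j ∈ Finset.Ioc m N, ((cl + ((j : ℝ) - (m : ℝ))) / ((j : ℝ) - (m : ℝ))) := by
    simp only [hBdef]
    rw [← Finset.prod_mul_distrib]
  have hEcount : (∏ j ∈ Finset.Ioc m N, (if j ∈ E then K else 1)) ≤ K ^ (k - 1) := by
    rw [Finset.prod_ite_mem]
    rw [Finset.prod_const]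
    apply pow_le_pow_right₀ hK1
    calc ((Finset.Ioc m N) ∩ E).card ≤ E.card := Finset.card_le_card (Finset.inter_subset_right)
      _ ≤ (Finset.Ico 1 ℓ).card := by rw [hEdef]; exact Finset.card_image_le
      _ = ℓ - 1 := by rw [Nat.card_Ico]
      _ ≤ k - 1 := by omega
  -- reindex the ratio product
  have hreindex : ∏ j ∈ Finset.Ioc m N, ((cl + ((j : ℝ) - (m : ℝ))) / ((j : ℝ) - (m : ℝ))) =
      ∏ t ∈ Finset.Ioc 0 (N - m), ((cl + (t : ℝ)) / (t : ℝ)) := by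
    apply Finset.prod_nbij' (fun j => j - m) (fun t => t + m)
    · intro a ha
      rw [Finset.mem_Ioc] at ha ⊢
      omega
    · intro a ha
      rw [Finset.mem_Ioc] at ha ⊢
      omega
    · intro a ha
      rw [Finset.mem_Ioc] at ha
      omega
    · intro a ha
      omega
    · intro a ha
      rw [Finset.mem_Ioc] at ha
      have : ((a - m : ℕ) : ℝ) = (a : ℝ) - (m : ℝ) := by
        rw [Nat.cast_sub (le_of_lt ha.1)]
      rw [this]
  have hratio1 : ∀ t ∈ Finset.Ioc 0 (N - 1), (1 : ℝ) ≤ (cl + (t : ℝ)) / (t : ℝ) := by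
    intro t ht
    rw [Finset.mem_Ioc] at ht
    have ht0 : (0 : ℝ) < (t : ℝ) := by exact_mod_cast ht.1
    rw [le_div_iff₀ ht0]
    linarith
  have hextend : ∏ t ∈ Finset.Ioc 0 (N - m), ((cl + (t : ℝ)) / (t : ℝ)) ≤
      ∏ t ∈ Finset.Ioc 0 (N - 1), ((cl + (t : ℝ)) / (t : ℝ)) := by
    have hmle : N - m ≤ N - 1 := by omega
    rw [← Finset.prod_Ioc_consecutive _ (Nat.zero_le (N - m)) hmle]
    apply le_mul_of_one_le_right
    · apply Finset.prod_nonneg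
      intro t ht
      rw [Finset.mem_Ioc] at ht
      have ht0 : (0 : ℝ) < (t : ℝ) := by exact_mod_cast ht.1
      positivity
    · calc (1 : ℝ) = ∏ _t ∈ Finset.Ioc (N - m) (N - 1), (1 : ℝ) := by simp
        _ ≤ ∏ t ∈ Finset.Ioc (N - m) (N - 1), ((cl + (t : ℝ)) / (t : ℝ)) := by
            apply Finset.prod_le_prod
            · intro t ht; exact zero_le_one
            · intro t ht
              rw [Finset.mem_Ioc] at ht
              apply hratio1
              rw [Finset.mem_Ioc]
              omega
  -- per-factor comparison with the target product
  have hperfactor : ∀ t ∈ Finset.Ioc 0 (N - 1),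
      (cl + (t : ℝ)) / (t : ℝ) ≤
      Real.exp (1 / (t : ℝ) ^ 2) * ((σ + cl + (t : ℝ)) / (σ + (t : ℝ))) := by
    intro t ht
    rw [Finset.mem_Ioc] at ht
    have ht1 : (1 : ℝ) ≤ (t : ℝ) := by exact_mod_cast ht.1
    have hcl1 : cl ≤ 1 := by linarith
    have hclσ : cl * σ ≤ 1 := by nlinarith [mul_le_one₀ hcl1 hσ0 hσ1.le]
    exact aux_perfactor cl σ (t : ℝ) hclpos hσ0 hclσ ht1
  have hexp2 : ∏ t ∈ Finset.Ioc 0 (N - 1), ((cl + (t : ℝ)) / (t : ℝ)) ≤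
      Real.exp 2 * ∏ t ∈ Finset.Ioc 0 (N - 1), ((σ + cl + (t : ℝ)) / (σ + (t : ℝ))) := by
    calc ∏ t ∈ Finset.Ioc 0 (N - 1), ((cl + (t : ℝ)) / (t : ℝ))
        ≤ ∏ t ∈ Finset.Ioc 0 (N - 1),
            (Real.exp (1 / (t : ℝ) ^ 2) * ((σ + cl + (t : ℝ)) / (σ + (t : ℝ)))) := by
          apply Finset.prod_le_prod
          · intro t ht
            rw [Finset.mem_Ioc] at ht
            have ht0 : (0 : ℝ) < (t : ℝ) := by exact_mod_cast ht.1
            positivity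
          · exact hperfactor
      _ = (∏ t ∈ Finset.Ioc 0 (N - 1), Real.exp (1 / (t : ℝ) ^ 2)) *
            ∏ t ∈ Finset.Ioc 0 (N - 1), ((σ + cl + (t : ℝ)) / (σ + (t : ℝ))) :=
          Finset.prod_mul_distrib
      _ ≤ Real.exp 2 * ∏ t ∈ Finset.Ioc 0 (N - 1), ((σ + cl + (t : ℝ)) / (σ + (t : ℝ))) := by
          apply mul_le_mul_of_nonneg_right
          · rw [← Real.exp_sum]
            exact Real.exp_le_exp.mpr (aux_sumsq (N - 1))
          · apply Finset.prod_nonneg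
            intro t ht
            rw [Finset.mem_Ioc] at ht
            have ht0 : (0 : ℝ) < (t : ℝ) := by exact_mod_cast ht.1
            positivity
  -- reindex the target product
  have htarget : ∏ j ∈ Finset.Icc 2 N, ((σ + cl + (j : ℝ) - 1) / (σ + (j : ℝ) - 1)) =
      ∏ t ∈ Finset.Ioc 0 (N - 1), ((σ + cl + (t : ℝ)) / (σ + (t : ℝ))) := by
    apply Finset.prod_nbij' (fun j => j - 1) (fun t => t + 1)
    · intro a ha
      rw [Finset.mem_Icc] at ha
      rw [Finset.mem_Ioc]
      omega
    · intro a ha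
      rw [Finset.mem_Ioc] at ha
      rw [Finset.mem_Icc]
      omega
    · intro a ha
      rw [Finset.mem_Icc] at ha
      omega
    · intro a ha
      omega
    · intro a ha
      rw [Finset.mem_Icc] at ha
      have : ((a - 1 : ℕ) : ℝ) = (a : ℝ) - 1 := by
        rw [Nat.cast_sub (by omega)]
        norm_num
      rw [this]
      ring_nf
  -- assemble everything
  have hBprod0 : 0 ≤ ∏ j ∈ Finset.Ioc m N, B j :=
    le_trans hhigh0 hhigh
  have hT0 : 0 ≤ ∏ t ∈ Finset.Ioc 0 (N - 1), ((σ + cl + (t : ℝ)) / (σ + (t : ℝ))) := by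
    apply Finset.prod_nonneg
    intro t ht
    rw [Finset.mem_Ioc] at ht
    have ht0 : (0 : ℝ) < (t : ℝ) := by exact_mod_cast ht.1
    positivity
  have hhighfinal : ∏ j ∈ Finset.Ioc m N, (cl + wvec N ℓ c i m - wvec N ℓ c i j) /
      (wvec N ℓ c i m - wvec N ℓ c i j) ≤
      K ^ (k - 1) * Real.exp 2 * ∏ t ∈ Finset.Ioc 0 (N - 1),
        ((σ + cl + (t : ℝ)) / (σ + (t : ℝ))) := by
    have hratio0 : 0 ≤ ∏ j ∈ Finset.Ioc m N,
        ((cl + ((j : ℝ) - (m : ℝ))) / ((j : ℝ) - (m : ℝ))) := by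
      rw [hreindex]
      apply Finset.prod_nonneg
      intro t ht
      rw [Finset.mem_Ioc] at ht
      have ht0 : (0 : ℝ) < (t : ℝ) := by exact_mod_cast ht.1
      positivity
    calc ∏ j ∈ Finset.Ioc m N, (cl + wvec N ℓ c i m - wvec N ℓ c i j) /
          (wvec N ℓ c i m - wvec N ℓ c i j)
        ≤ ∏ j ∈ Finset.Ioc m N, B j := hhigh
      _ = (∏ j ∈ Finset.Ioc m N, (if j ∈ E then K else 1)) *
            ∏ j ∈ Finset.Ioc m N, ((cl + ((j : ℝ) - (m : ℝ))) / ((j : ℝ) - (m : ℝ))) := hBsplit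
      _ ≤ K ^ (k - 1) *
            ∏ j ∈ Finset.Ioc m N, ((cl + ((j : ℝ) - (m : ℝ))) / ((j : ℝ) - (m : ℝ))) :=
          mul_le_mul_of_nonneg_right hEcount hratio0
      _ = K ^ (k - 1) * ∏ t ∈ Finset.Ioc 0 (N - m), ((cl + (t : ℝ)) / (t : ℝ)) := by
          rw [hreindex]
      _ ≤ K ^ (k - 1) * ∏ t ∈ Finset.Ioc 0 (N - 1), ((cl + (t : ℝ)) / (t : ℝ)) :=
          mul_le_mul_of_nonneg_left hextend (by positivity)
      _ ≤ K ^ (k - 1) * (Real.exp 2 * ∏ t ∈ Finset.Ioc 0 (N - 1),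
            ((σ + cl + (t : ℝ)) / (σ + (t : ℝ)))) :=
          mul_le_mul_of_nonneg_left hexp2 (by positivity)
      _ = K ^ (k - 1) * Real.exp 2 * ∏ t ∈ Finset.Ioc 0 (N - 1),
            ((σ + cl + (t : ℝ)) / (σ + (t : ℝ))) := by ring
  rw [htarget]
  calc (∏ j ∈ Finset.Ico 1 m, (cl + wvec N ℓ c i m - wvec N ℓ c i j) /
          (wvec N ℓ c i m - wvec N ℓ c i j)) *
        ∏ j ∈ Finset.Ioc m N, (cl + wvec N ℓ c i m - wvec N ℓ c i j) /
          (wvec N ℓ c i m - wvec N ℓ c i j)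
      ≤ 1 * ∏ j ∈ Finset.Ioc m N, (cl + wvec N ℓ c i m - wvec N ℓ c i j) /
          (wvec N ℓ c i m - wvec N ℓ c i j) :=
        mul_le_mul_of_nonneg_right hlow1 hhigh0
    _ = ∏ j ∈ Finset.Ioc m N, (cl + wvec N ℓ c i m - wvec N ℓ c i j) /
          (wvec N ℓ c i m - wvec N ℓ c i j) := one_mul _
    _ ≤ K ^ (k - 1) * Real.exp 2 * ∏ t ∈ Finset.Ioc 0 (N - 1),
          ((σ + cl + (t : ℝ)) / (σ + (t : ℝ))) := hhighfinal
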